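/- Let g : (0,1) → [0,∞) be a non-increasing function, let G(p) = ∫_0^p g(t) dt, and assume G(p) ≤ 1 for all p ∈ (0,1). Then for every integer M ≥ 1, the function p ↦ M·(1 − G(p))^{M−1}·g(p) is non-increasing on (0,1). Moreover, if g is completely monotone on (0,1) (in particular infinitely differentiable), then p ↦ M·(1 − G(p))^{M−1}·g(p) is completely monotone on (0,1). -/

import Mathlib

open MeasureTheory
open scoped ContDiff

/-- Complete monotonicity on a set. -/
def CMOn (s : Set ℝ) (f : ℝ → ℝ) : Prop :=
  ContDiffOn ℝ (⊤ : ℕ∞) f s ∧ ∀ k : ℕ, ∀ p ∈ s, 0 ≤ (-1 : ℝ) ^ k * iteratedDeriv k f p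

section aux

variable {s : Set ℝ} (hs : IsOpen s)
include hs

lemma aux_diffAt {f : ℝ → ℝ} (hf : ContDiffOn ℝ (⊤ : ℕ∞) f s) {x : ℝ} (hx : x ∈ s) :
    DifferentiableAt ℝ f x :=
  (hf.contDiffAt (hs.mem_nhds hx)).differentiableAt (by simp)

lemma aux_deriv_smooth {f : ℝ → ℝ} (hf : ContDiffOn ℝ (⊤ : ℕ∞) f s) :
    ContDiffOn ℝ (⊤ : ℕ∞) (deriv f) s :=
  hf.deriv_of_isOpen hs (by simp)

lemma aux_iteratedDeriv_add {f g : ℝ → ℝ} (hf : ContDiffOn ℝ (⊤ : ℕ∞) f s)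
    (hg : ContDiffOn ℝ (⊤ : ℕ∞) g s) (k : ℕ) {x : ℝ} (hx : x ∈ s) :
    iteratedDeriv k (fun y => f y + g y) x = iteratedDeriv k f x + iteratedDeriv k g x := by
  induction k generalizing f g with
  | zero => simp
  | succ k IH =>
    rw [iteratedDeriv_succ', iteratedDeriv_succ', iteratedDeriv_succ']
    have e : Set.EqOn (deriv fun y => f y + g y) (fun y => deriv f y + deriv g y) s :=
      fun y hy => deriv_add (aux_diffAt hs hf hy) (aux_diffAt hs hg hy)
    rw [e.iteratedDeriv_of_isOpen hs k hx]
    exact IH (aux_deriv_smooth hs hf) (aux_deriv_smooth hs hg)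

lemma aux_iteratedDeriv_const_mul {f : ℝ → ℝ} (hf : ContDiffOn ℝ (⊤ : ℕ∞) f s) (c : ℝ)
    (k : ℕ) {x : ℝ} (hx : x ∈ s) :
    iteratedDeriv k (fun y => c * f y) x = c * iteratedDeriv k f x := by
  induction k generalizing f with
  | zero => simp
  | succ k IH =>
    rw [iteratedDeriv_succ', iteratedDeriv_succ']
    have e : Set.EqOn (deriv fun y => c * f y) (fun y => c * deriv f y) s :=
      fun y hy => deriv_const_mul c (aux_diffAt hs hf hy)
    rw [e.iteratedDeriv_of_isOpen hs k hx]
    exact IH (aux_deriv_smooth hs hf)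

omit hs in
lemma aux_iteratedDeriv_zero_fun (k : ℕ) (x : ℝ) :
    iteratedDeriv k (fun _ : ℝ => (0 : ℝ)) x = 0 := by
  induction k generalizing x with
  | zero => simp
  | succ k IH =>
    rw [iteratedDeriv_succ']
    have : deriv (fun _ : ℝ => (0 : ℝ)) = fun _ : ℝ => (0 : ℝ) := by
      funext y; exact deriv_const y 0
    rw [this]
    exact IH x

lemma aux_cm_negderiv {f : ℝ → ℝ} (hf : CMOn s f) : CMOn s (fun y => -deriv f y) := by
  refine ⟨(aux_deriv_smooth hs hf.1).neg, fun k p hp => ?_⟩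
  have h1 : iteratedDeriv k (fun y => -deriv f y) p = -iteratedDeriv k (deriv f) p :=
    iteratedDeriv_neg k (deriv f) p
  have h2 : iteratedDeriv k (deriv f) p = iteratedDeriv (k + 1) f p := by
    rw [iteratedDeriv_succ']
  have h3 := hf.2 (k + 1) p hp
  rw [h1, h2]
  rw [pow_succ] at h3
  nlinarith [h3]

lemma aux_cm_mul {f g : ℝ → ℝ} (hf : CMOn s f) (hg : CMOn s g) :
    CMOn s (fun y => f y * g y) := by
  refine ⟨hf.1.mul hg.1, ?_⟩
  suffices key : ∀ k : ℕ, ∀ f g : ℝ → ℝ, CMOn s f → CMOn s g → ∀ p ∈ s,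
      0 ≤ (-1 : ℝ) ^ k * iteratedDeriv k (fun y => f y * g y) p by
    exact fun k p hp => key k f g hf hg p hp
  intro k
  induction k with
  | zero =>
    intro f g hf hg p hp
    have h1 := hf.2 0 p hp
    have h2 := hg.2 0 p hp
    simp only [pow_zero, one_mul, iteratedDeriv_zero] at h1 h2 ⊢
    exact mul_nonneg h1 h2
  | succ k IH =>
    intro f g hf hg p hp
    rw [iteratedDeriv_succ']
    have e : Set.EqOn (deriv fun y => f y * g y) (fun y => deriv f y * g y + f y * deriv g y)
        s := fun y hy => deriv_mul (aux_diffAt hs hf.1 hy) (aux_diffAt hs hg.1 hy)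
    rw [e.iteratedDeriv_of_isOpen hs k hp,
      aux_iteratedDeriv_add hs ((aux_deriv_smooth hs hf.1).mul hg.1)
        (hf.1.mul (aux_deriv_smooth hs hg.1)) k hp]
    have h1 : iteratedDeriv k (fun y => deriv f y * g y) p =
        -iteratedDeriv k (fun y => (-deriv f y) * g y) p := by
      have : (fun y => (-deriv f y) * g y) = fun y => -(deriv f y * g y) := by
        funext y; ring
      rw [this, iteratedDeriv_fun_neg]; ring
    have h2 : iteratedDeriv k (fun y => f y * deriv g y) p =
        -iteratedDeriv k (fun y => f y * (-deriv g y)) p := by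
      have : (fun y => f y * (-deriv g y)) = fun y => -(f y * deriv g y) := by
        funext y; ring
      rw [this, iteratedDeriv_fun_neg]; ring
    have hA := IH (fun y => -deriv f y) g (aux_cm_negderiv hs hf) hg p hp
    have hB := IH f (fun y => -deriv g y) hf (aux_cm_negderiv hs hg) p hp
    rw [h1, h2, pow_succ]
    nlinarith [hA, hB]

omit hs in
lemma aux_cm_const {c : ℝ} (hc : 0 ≤ c) : CMOn s (fun _ => c) := by
  refine ⟨contDiffOn_const, fun k p hp => ?_⟩
  cases k with
  | zero => simpa using hc
  | succ k =>
    rw [iteratedDeriv_succ']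
    have : deriv (fun _ : ℝ => c) = fun _ : ℝ => (0 : ℝ) := by
      funext y; exact deriv_const y c
    rw [this, aux_iteratedDeriv_zero_fun]
    simp

lemma aux_cm_pow {f : ℝ → ℝ} (hf : CMOn s f) (n : ℕ) : CMOn s (fun y => f y ^ n) := by
  induction n with
  | zero =>
    have : (fun y => f y ^ 0) = fun _ : ℝ => (1 : ℝ) := by funext y; simp
    rw [this]; exact aux_cm_const zero_le_one
  | succ n IH =>
    have : (fun y => f y ^ (n + 1)) = fun y => f y ^ n * f y := by
      funext y; rw [pow_succ]
    rw [this]; exact aux_cm_mul hs IH hf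

end aux

/-- let g be a non-increasing, nonnegative function on (0,1), let
G(p) = ∫_0^p g(t) dt with G(p) ≤ 1 on (0,1). Then for every integer M ≥ 1 the function
p ↦ M·(1 − G(p))^{M−1}·g(p) is non-increasing on (0,1); moreover, if g is completely
monotone on (0,1) (in particular infinitely differentiable there), then
p ↦ M·(1 − G(p))^{M−1}·g(p) is completely monotone on (0,1). -/
theorem stmt_18
    (g G : ℝ → ℝ)
    (hg_anti : AntitoneOn g (Set.Ioo 0 1))
    (hg_nonneg : ∀ p ∈ Set.Ioo (0 : ℝ) 1, 0 ≤ g p)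
    (hg_int : ∀ p ∈ Set.Ioo (0 : ℝ) 1, IntervalIntegrable g volume 0 p)
    (hG : ∀ p : ℝ, G p = ∫ t in (0 : ℝ)..p, g t)
    (hG_le : ∀ p ∈ Set.Ioo (0 : ℝ) 1, G p ≤ 1) :
    (∀ M : ℕ, 1 ≤ M →
      AntitoneOn (fun p => (M : ℝ) * (1 - G p) ^ (M - 1) * g p) (Set.Ioo 0 1)) ∧
    (ContDiffOn ℝ (⊤ : ℕ∞) g (Set.Ioo 0 1) →
      (∀ k : ℕ, ∀ p ∈ Set.Ioo (0 : ℝ) 1, 0 ≤ (-1 : ℝ) ^ k * iteratedDeriv k g p) →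
      ∀ M : ℕ, 1 ≤ M → ∀ k : ℕ, ∀ p ∈ Set.Ioo (0 : ℝ) 1,
        0 ≤ (-1 : ℝ) ^ k *
          iteratedDeriv k (fun q => (M : ℝ) * (1 - G q) ^ (M - 1) * g q) p) := by
  have hs : IsOpen (Set.Ioo (0 : ℝ) 1) := isOpen_Ioo
  -- G is monotone on (0,1)
  have hG_mono : ∀ p ∈ Set.Ioo (0 : ℝ) 1, ∀ q ∈ Set.Ioo (0 : ℝ) 1, p ≤ q → G p ≤ G q := by
    intro p hp q hq hpq
    have hint_pq : IntervalIntegrable g volume p q := by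
      apply (hg_int q hq).mono_set
      apply Set.uIcc_subset_uIcc
      · exact Set.mem_uIcc.2 (Or.inl ⟨hp.1.le, hpq⟩)
      · exact Set.mem_uIcc.2 (Or.inl ⟨le_trans hp.1.le hpq, le_refl q⟩)
    have hadd : G p + ∫ t in p..q, g t = G q := by
      rw [hG p, hG q]
      exact intervalIntegral.integral_add_adjacent_intervals (hg_int p hp) hint_pq
    have hnn : 0 ≤ ∫ t in p..q, g t := by
      apply intervalIntegral.integral_nonneg hpq
      intro x hx
      exact hg_nonneg x ⟨lt_of_lt_of_le hp.1 hx.1, lt_of_le_of_lt hx.2 hq.2⟩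
    linarith
  constructor
  · -- antitone part
    intro M hM p hp q hq hpq
    have h1q : 0 ≤ 1 - G q := by linarith [hG_le q hq]
    have hGpq : G p ≤ G q := hG_mono p hp q hq hpq
    have hgq : 0 ≤ g q := hg_nonneg q hq
    have hgpq : g q ≤ g p := hg_anti hp hq hpq
    have hbase : (1 - G q) ^ (M - 1) ≤ (1 - G p) ^ (M - 1) :=
      pow_le_pow_left₀ h1q (by linarith) _
    have hbq : 0 ≤ (1 - G q) ^ (M - 1) := pow_nonneg h1q _
    have hMn : (0 : ℝ) ≤ M := Nat.cast_nonneg M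
    show (M : ℝ) * (1 - G q) ^ (M - 1) * g q ≤ (M : ℝ) * (1 - G p) ^ (M - 1) * g p
    apply mul_le_mul
    · exact mul_le_mul_of_nonneg_left hbase hMn
    · exact hgpq
    · exact hgq
    · exact mul_nonneg hMn (le_trans hbq hbase)
  · -- complete monotonicity part
    intro hsmooth hcm M hM k p hp
    -- FTC: G has derivative g on (0,1)
    have hG' : ∀ y ∈ Set.Ioo (0 : ℝ) 1, HasDerivAt G (g y) y := by
      intro y hy
      have hGfun : G = fun u => ∫ t in (0 : ℝ)..u, g t := funext hG
      rw [hGfun]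
      apply intervalIntegral.integral_hasDerivAt_right (hg_int y hy)
      · exact ContinuousOn.stronglyMeasurableAtFilter hs hsmooth.continuousOn y hy
      · exact (hsmooth.contDiffAt (hs.mem_nhds hy)).continuousAt
    have hGsmooth : ContDiffOn ℝ (⊤ : ℕ∞) G (Set.Ioo 0 1) := by
      rw [show ((⊤ : ℕ∞) : WithTop ℕ∞) = ∞ from rfl, contDiffOn_infty_iff_deriv_of_isOpen hs]
      constructor
      · exact fun y hy => (hG' y hy).differentiableAt.differentiableWithinAt
      · exact hsmooth.congr fun y hy => (hG' y hy).deriv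
    have cm_g : CMOn (Set.Ioo 0 1) g := ⟨hsmooth, hcm⟩
    have cm_oneG : CMOn (Set.Ioo 0 1) (fun q => 1 - G q) := by
      refine ⟨contDiffOn_const.sub hGsmooth, fun j y hy => ?_⟩
      cases j with
      | zero =>
        have := hG_le y hy
        simp only [pow_zero, one_mul, iteratedDeriv_zero]
        linarith
      | succ j =>
        rw [iteratedDeriv_succ']
        have e : Set.EqOn (deriv fun q => (1 : ℝ) - G q) (fun q => -g q)
            (Set.Ioo 0 1) := by
          intro z hz
          exact ((hG' z hz).const_sub 1).deriv
        rw [e.iteratedDeriv_of_isOpen hs j hy, iteratedDeriv_fun_neg]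
        have := hcm j y hy
        rw [pow_succ]
        nlinarith [this]
    have cm_H : CMOn (Set.Ioo 0 1) (fun q => (1 - G q) ^ (M - 1) * g q) :=
      aux_cm_mul hs (aux_cm_pow hs cm_oneG (M - 1)) cm_g
    have e : (fun q => (M : ℝ) * (1 - G q) ^ (M - 1) * g q)
        = fun q => (M : ℝ) * ((1 - G q) ^ (M - 1) * g q) := by
      funext q; ring
    rw [e, aux_iteratedDeriv_const_mul hs cm_H.1 (M : ℝ) k hp]
    have := cm_H.2 k p hp
    have hMn : (0 : ℝ) ≤ M := Nat.cast_nonneg M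
    nlinarith [this]
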